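/- (Chebotarëv) If d is prime, then every square submatrix of the d×d Fourier matrix F with entries F_{vv'} = d^{-1/2} ω^{-vv'}, ω = e^{2πi/d}, has nonzero determinant. -/

import Mathlib

open Complex Real Matrix

/-- Support size: number of nonzero coordinates. -/
noncomputable def supp {d : ℕ} (ψ : Fin d → ℂ) : ℕ :=
  (Finset.univ.filter (fun v => ψ v ≠ 0)).card

/-- The discrete Fourier matrix `F_{v v'} = d^{-1/2} e^{-2πi v v' / d}`. -/
noncomputable def Fourier (d : ℕ) : Matrix (Fin d) (Fin d) ℂ :=
  fun v v' => (1 / Real.sqrt d : ℂ) *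
    Complex.exp (-(2 * Real.pi * Complex.I * (v : ℕ) * (v' : ℕ)) / d)

/-- The standard Hadamard matrices `[H_j]_{xk} = d^{-1/2} ω^{-kx + (j-1)x²}`,
    with `ω = e^{2πi/d}`, for `j ∈ {1,…,d}`. -/
noncomputable def stdH (d j : ℕ) : Matrix (Fin d) (Fin d) ℂ :=
  fun x k => (1 / Real.sqrt d : ℂ) *
    Complex.exp (2 * Real.pi * Complex.I *
      (((((j : ℤ) - 1) * (x : ℤ) ^ 2 - (k : ℤ) * (x : ℤ) : ℤ) : ℂ) / (d : ℂ)))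

/-- The complete standard set of MU bases: `H_0 = I` (the computational basis)
    together with `H_1, …, H_d`. -/
noncomputable def stdB (d j : ℕ) : Matrix (Fin d) (Fin d) ℂ :=
  if j = 0 then 1 else stdH d j

section ChebAux

open Finset Polynomial

lemma aux_le_apply {n : ℕ} {g : Fin n → ℕ} (hg : StrictMono g) : ∀ i : Fin n, (i : ℕ) ≤ g i := by
  have H : ∀ k, ∀ i : Fin n, (i:ℕ) = k → k ≤ g i := by
    intro k
    induction k with
    | zero => intro i _; exact Nat.zero_le _
    | succ k ih =>
      intro i hi
      have hk : k < n := by omega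
      have h1 : (⟨k, hk⟩ : Fin n) < i := by simp [Fin.lt_def, hi]
      have := hg h1
      have := ih ⟨k, hk⟩ rfl
      omega
  exact fun i => H (i:ℕ) i rfl

lemma aux_sum_univ (s : Finset ℕ) :
    ∑ i : Fin s.card, (s.orderIsoOfFin rfl i : ℕ) = ∑ x ∈ s, x := by
  classical
  rw [show (∑ x ∈ s, x) = ∑ x ∈ s.attach, (x : ℕ) from (Finset.sum_attach s _).symm]
  exact Fintype.sum_equiv (s.orderIsoOfFin rfl).toEquiv _ _ (fun i => rfl)

lemma aux_fin_sum (n : ℕ) : ∑ i : Fin n, (i:ℕ) = ∑ i ∈ range n, i :=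
  Fin.sum_univ_eq_sum_range (fun i => i) n

lemma aux_sum_ge (s : Finset ℕ) : ∑ i ∈ range s.card, i ≤ ∑ x ∈ s, x := by
  classical
  have hg : StrictMono (fun i => (s.orderIsoOfFin rfl i : ℕ)) := fun i j h =>
    (s.orderIsoOfFin rfl).strictMono h
  calc ∑ i ∈ range s.card, i = ∑ i : Fin s.card, (i:ℕ) := (aux_fin_sum _).symm
    _ ≤ ∑ i : Fin s.card, (s.orderIsoOfFin rfl i : ℕ) :=
        Finset.sum_le_sum (fun i _ => aux_le_apply hg i)
    _ = _ := aux_sum_univ s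

lemma aux_sum_eq (s : Finset ℕ) (h : ∑ x ∈ s, x ≤ ∑ i ∈ range s.card, i) :
    s = range s.card := by
  classical
  have hg : StrictMono (fun i => (s.orderIsoOfFin rfl i : ℕ)) := fun i j h =>
    (s.orderIsoOfFin rfl).strictMono h
  have hle := fun i => aux_le_apply hg i
  have h1 := aux_sum_univ s
  have h2 := aux_fin_sum s.card
  have heq : ∀ i : Fin s.card, (i : ℕ) = (s.orderIsoOfFin rfl i : ℕ) := by
    have hs : ∑ i : Fin s.card, (i:ℕ) ≤ ∑ i : Fin s.card, (s.orderIsoOfFin rfl i : ℕ) :=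
      Finset.sum_le_sum (fun i _ => hle i)
    have hall := (Finset.sum_eq_sum_iff_of_le (fun i _ => hle i)).mp
      (le_antisymm hs (by omega))
    exact fun i => hall i (mem_univ i)
  apply Finset.eq_of_superset_of_card_ge ?_ (by simp)
  intro x hx
  rw [mem_range] at hx
  have : ((s.orderIsoOfFin rfl) ⟨x, hx⟩ : ℕ) ∈ s := (s.orderIsoOfFin rfl ⟨x, hx⟩).2
  rwa [← heq ⟨x, hx⟩] at this

lemma inj_im_card {n d : ℕ} (f : Fin n → Fin d) (hf : Function.Injective f) :
    (Finset.image (fun i => (f i : ℕ)) Finset.univ).card = n := by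
  rw [show (fun i => (f i : ℕ)) = (Fin.val ∘ f) from rfl,
    Finset.card_image_of_injective _ (Fin.val_injective.comp hf), Finset.card_univ,
    Fintype.card_fin]

lemma inj_im_sum {n d : ℕ} (f : Fin n → Fin d) (hf : Function.Injective f) :
    ∑ x ∈ Finset.image (fun i => (f i : ℕ)) Finset.univ, x = ∑ i, (f i : ℕ) :=
  Finset.sum_image (fun a _ b _ h => (Fin.val_injective.comp hf) h)

lemma inj_sum_ge {n d : ℕ} (f : Fin n → Fin d) (hf : Function.Injective f) :
    ∑ i ∈ range n, i ≤ ∑ i, (f i : ℕ) := by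
  have := aux_sum_ge (Finset.image (fun i => (f i : ℕ)) Finset.univ)
  rwa [inj_im_card f hf, inj_im_sum f hf] at this

lemma inj_sum_eq {n d : ℕ} (f : Fin n → Fin d) (hf : Function.Injective f)
    (h : ∑ i, (f i : ℕ) ≤ ∑ i ∈ range n, i) : ∀ i, (f i : ℕ) < n := by
  intro i
  have h2 := aux_sum_eq (Finset.image (fun i => (f i : ℕ)) Finset.univ)
    (by rwa [inj_im_card f hf, inj_im_sum f hf])
  have : (f i : ℕ) ∈ Finset.image (fun i => (f i : ℕ)) Finset.univ :=
    Finset.mem_image_of_mem _ (mem_univ i)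
  rw [h2, inj_im_card f hf, mem_range] at this
  exact this

open Finset Polynomial Matrix

section core
variable {d n : ℕ}

-- choose-matrix determinant for non-injective index map vanishes
lemma Cd_zero (b : Fin n → ℕ) (f : Fin n → Fin d) (hf : ¬ Function.Injective f) :
    Matrix.det (Matrix.of fun i j : Fin n => (Nat.choose (b j) (f i) : ℤ)) = 0 := by
  simp only [Function.Injective, not_forall] at hf
  obtain ⟨i1, i2, h12, hne⟩ := hf
  exact Matrix.det_zero_of_row_eq hne (by funext j; simp [h12])

end core

section expand
variable {d n : ℕ}

lemma entry_expand (aa bb : ℕ) (hb : bb < d) :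
    (X : ℤ[X]) ^ (aa * bb) =
      ∑ k : Fin d, (X ^ aa - 1) ^ (k : ℕ) * C ((Nat.choose bb (k : ℕ) : ℤ)) := by
  have h1 : (X : ℤ[X]) ^ (aa * bb) = ((X ^ aa - 1) + 1) ^ bb := by
    rw [sub_add_cancel, ← pow_mul]
  rw [h1, add_pow]
  rw [Fin.sum_univ_eq_sum_range
    (fun k => (X ^ aa - 1) ^ k * C ((Nat.choose bb k : ℤ))) d]
  rw [← Finset.sum_subset (Finset.range_subset_range.mpr hb)]
  · apply Finset.sum_congr rfl
    intro k _
    simp [C_eq_natCast]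
  · intro k _ hk
    rw [Finset.mem_range] at hk
    push_neg at hk
    rw [Nat.choose_eq_zero_of_lt (by omega)]
    simp

lemma det_expand (a b : Fin n → ℕ) (hb : ∀ j, b j < d) :
    (Matrix.of fun i j : Fin n => (X : ℤ[X]) ^ (a i * b j)).det
      = ∑ f : Fin n → Fin d, (∏ i, ((X : ℤ[X]) ^ (a i) - 1) ^ ((f i : ℕ))) *
          C (Matrix.det (Matrix.of fun i j : Fin n => (Nat.choose (b j) (f i) : ℤ))) := by
  classical
  have h1 : (Matrix.of fun i j : Fin n => (X : ℤ[X]) ^ (a i * b j)) =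
      fun i => ∑ k : Fin d,
        (fun j => ((X:ℤ[X]) ^ (a i) - 1) ^ (k : ℕ) * C ((Nat.choose (b j) (k : ℕ) : ℤ))) := by
    funext i j
    simpa using entry_expand (a i) (b j) (hb j)
  show Matrix.detRowAlternating (Matrix.of fun i j : Fin n => (X : ℤ[X]) ^ (a i * b j)) = _
  rw [h1]
  refine (Matrix.detRowAlternating.toMultilinearMap.map_sum
    (g := fun (i : Fin n) (k : Fin d) => (fun j => ((X:ℤ[X]) ^ (a i) - 1) ^ (k : ℕ)
      * C ((Nat.choose (b j) (k : ℕ) : ℤ))))).trans ?_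
  apply Finset.sum_congr rfl
  intro f _
  have h2 : (fun i => (fun j => ((X:ℤ[X]) ^ (a i) - 1) ^ ((f i : ℕ))
        * C ((Nat.choose (b j) ((f i : ℕ)) : ℤ))))
      = fun i => (((X:ℤ[X]) ^ (a i) - 1) ^ ((f i : ℕ))) •
          (fun j => C ((Nat.choose (b j) ((f i : ℕ)) : ℤ))) := by
    funext i j; simp [smul_eq_mul]
  show Matrix.detRowAlternating.toMultilinearMap _ = _
  rw [h2, Matrix.detRowAlternating.toMultilinearMap.map_smul_univ, smul_eq_mul]
  congr 1
  have h3 : (fun i => fun j => C ((Nat.choose (b j) ((f i : ℕ)) : ℤ)))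
      = (Matrix.of fun i j : Fin n => (Nat.choose (b j) (f i) : ℤ)).map (C : ℤ →+* ℤ[X]) := by
    funext i j; rfl
  show Matrix.det _ = _
  rw [h3]; exact (RingHom.map_det (C : ℤ →+* ℤ[X]) _).symm

lemma det_factored (a b : Fin n → ℕ) (hb : ∀ j, b j < d) :
    (Matrix.of fun i j : Fin n => (X : ℤ[X]) ^ (a i * b j)).det
      = (X - 1) ^ (∑ i ∈ range n, i) *
        ∑ f : Fin n → Fin d,
          (X - 1) ^ ((∑ i, (f i : ℕ)) - ∑ i ∈ range n, i) *
          (∏ i, (∑ t ∈ range (a i), (X:ℤ[X]) ^ t) ^ ((f i : ℕ))) *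
          C (Matrix.det (Matrix.of fun i j : Fin n => (Nat.choose (b j) (f i) : ℤ))) := by
  classical
  rw [det_expand a b hb, Finset.mul_sum]
  apply Finset.sum_congr rfl
  intro f _
  by_cases hinj : Function.Injective f
  · have hm := inj_sum_ge f hinj
    have hz : ∀ i, (X:ℤ[X]) ^ (a i) - 1 = (∑ t ∈ range (a i), X ^ t) * (X - 1) :=
      fun i => (geom_sum_mul X (a i)).symm
    have h4 : (∏ i, ((X:ℤ[X]) ^ (a i) - 1) ^ ((f i : ℕ)))
        = (∏ i, (∑ t ∈ range (a i), (X:ℤ[X]) ^ t) ^ ((f i : ℕ))) *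
          (X - 1) ^ (∑ i, (f i : ℕ)) := by
      simp_rw [hz, mul_pow, Finset.prod_mul_distrib, Finset.prod_pow_eq_pow_sum]
    rw [h4]
    have h5 : (X - 1 : ℤ[X]) ^ (∑ i, (f i : ℕ))
        = (X - 1) ^ (∑ i ∈ range n, i) *
          (X - 1) ^ ((∑ i, (f i : ℕ)) - ∑ i ∈ range n, i) := by
      rw [← pow_add]
      congr 1
      omega
    rw [h5]
    ring
  · rw [Cd_zero b f hinj]
    simp

lemma sum_perm_eq (hnd : n ≤ d) (a b : Fin n → ℕ) :
    (∑ f : Fin n → Fin d, (0:ℤ) ^ ((∑ i, (f i : ℕ)) - ∑ i ∈ range n, i) *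
      (∏ i, (a i : ℤ) ^ ((f i : ℕ))) *
      (Matrix.of fun i j : Fin n => (Nat.choose (b j) (f i) : ℤ)).det)
    = (Matrix.vandermonde fun i => (a i : ℤ)).det *
      (Matrix.of fun i j : Fin n => (Nat.choose (b j) ((i : ℕ)) : ℤ)).det := by
  classical
  set m := ∑ i ∈ range n, i with hm
  set trm : (Fin n → Fin d) → ℤ := fun f =>
    (0:ℤ) ^ ((∑ i, (f i : ℕ)) - m) * (∏ i, (a i : ℤ) ^ ((f i : ℕ))) *
      (Matrix.of fun i j : Fin n => (Nat.choose (b j) (f i) : ℤ)).det with htrm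
  set Φ : Equiv.Perm (Fin n) → (Fin n → Fin d) := fun τ i => Fin.castLE hnd (τ i) with hΦ
  have hΦinj : Function.Injective Φ := by
    intro τ1 τ2 h
    apply Equiv.ext
    intro i
    exact Fin.castLE_injective hnd (congrFun h i)
  have himage : ∀ f : Fin n → Fin d, f ∉ Finset.image Φ Finset.univ → trm f = 0 := by
    intro f hnotin
    by_contra hne
    have hCd : (Matrix.of fun i j : Fin n => (Nat.choose (b j) (f i) : ℤ)).det ≠ 0 := by
      intro h; exact hne (by simp [htrm, h])
    have hinj : Function.Injective f := by
      by_contra hni; exact hCd (Cd_zero b f hni)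
    have h0 : (∑ i, (f i : ℕ)) - m = 0 := by
      by_contra h0; exact hne (by simp [htrm, zero_pow h0])
    have hlt := inj_sum_eq f hinj (by have := inj_sum_ge f hinj; omega)
    apply hnotin
    have hbij : Function.Bijective (fun i : Fin n => (⟨(f i : ℕ), hlt i⟩ : Fin n)) := by
      apply Finite.injective_iff_bijective.mp
      intro x y hxy
      simp only [Fin.mk.injEq] at hxy
      exact hinj (Fin.ext hxy)
    refine Finset.mem_image.mpr ⟨Equiv.ofBijective _ hbij, Finset.mem_univ _, ?_⟩
    funext i
    exact Fin.ext rfl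
  rw [← Finset.sum_subset (Finset.subset_univ (Finset.image Φ Finset.univ))
    (fun f _ hf => himage f hf)]
  rw [Finset.sum_image (fun τ1 _ τ2 _ h => hΦinj h)]
  have hsum : ∀ τ : Equiv.Perm (Fin n), (∑ i, ((Φ τ i : ℕ))) = m := by
    intro τ
    have : ∀ i, ((Φ τ i : ℕ)) = ((τ i : ℕ)) := fun i => rfl
    simp only [this]
    rw [Equiv.sum_comp τ (fun i : Fin n => (i : ℕ))]
    exact aux_fin_sum n
  have hCdperm : ∀ τ : Equiv.Perm (Fin n),
      (Matrix.of fun i j : Fin n => (Nat.choose (b j) (Φ τ i) : ℤ)).det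
      = (Equiv.Perm.sign τ : ℤ) *
        (Matrix.of fun i j : Fin n => (Nat.choose (b j) ((i : ℕ)) : ℤ)).det := by
    intro τ
    have h6 : (Matrix.of fun i j : Fin n => (Nat.choose (b j) (Φ τ i) : ℤ))
        = (Matrix.of fun i j : Fin n => (Nat.choose (b j) ((i : ℕ)) : ℤ)).submatrix τ id := by
      ext i j
      rfl
    rw [h6, Matrix.det_permute]
    simp
  have hvdm : (Matrix.vandermonde fun i => (a i : ℤ)).det
      = ∑ τ : Equiv.Perm (Fin n), (Equiv.Perm.sign τ : ℤ) * ∏ i, (a i : ℤ) ^ ((τ i : ℕ)) := by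
    rw [← Matrix.det_transpose, Matrix.det_apply']
    apply Finset.sum_congr rfl
    intro τ _
    rfl
  calc ∑ τ : Equiv.Perm (Fin n), trm (Φ τ)
      = ∑ τ : Equiv.Perm (Fin n), ((Equiv.Perm.sign τ : ℤ) * ∏ i, (a i : ℤ) ^ ((τ i : ℕ))) *
          (Matrix.of fun i j : Fin n => (Nat.choose (b j) ((i : ℕ)) : ℤ)).det := by
        apply Finset.sum_congr rfl
        intro τ _
        rw [htrm]
        simp only [hsum τ, Nat.sub_self, pow_zero, one_mul, hCdperm τ]
        have : ∀ i, ((Φ τ i : ℕ)) = ((τ i : ℕ)) := fun i => rfl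
        simp only [this]
        ring
    _ = _ := by rw [← Finset.sum_mul, hvdm]

lemma choose_det (b : Fin n → ℕ) :
    (∏ k : Fin n, ((k : ℕ).factorial : ℤ)) *
      (Matrix.of fun i j : Fin n => (Nat.choose (b j) ((i : ℕ)) : ℤ)).det
    = (Matrix.vandermonde fun j => (b j : ℤ)).det := by
  rw [Matrix.det_eval_matrixOfPolynomials_eq_det_vandermonde (fun j => ((b j : ℕ) : ℤ))
    (fun k => descPochhammer ℤ (k : ℕ))
    (fun k => descPochhammer_natDegree ℤ (k : ℕ)) (fun k => monic_descPochhammer ℤ (k : ℕ))]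
  have h : (Matrix.of fun i j : Fin n => ((descPochhammer ℤ (j : ℕ)).eval ((b i : ℕ) : ℤ)))
      = Matrix.of fun i j : Fin n =>
          (((j : ℕ).factorial : ℤ)) * ((Nat.choose (b i) (j : ℕ) : ℤ)) := by
    ext i j
    rw [Matrix.of_apply, Matrix.of_apply, descPochhammer_eval_eq_descFactorial,
      Nat.descFactorial_eq_factorial_mul_choose]
    push_cast
    ring
  rw [h, show (of fun i j : Fin n => ((j : ℕ).factorial : ℤ) * ((Nat.choose (b i) (j : ℕ) : ℤ))).det
      = (∏ k : Fin n, ((k : ℕ).factorial : ℤ)) * (of fun i j : Fin n => ((Nat.choose (b i) (j : ℕ) : ℤ))).det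
      from Matrix.det_mul_row _ (of fun i j : Fin n => ((Nat.choose (b i) (j : ℕ) : ℤ)))]
  congr 1
  rw [← Matrix.det_transpose]
  congr 1

lemma not_dvd_vandermonde {d : ℕ} (hd : d.Prime) {n : ℕ} (v : Fin n → Fin d)
    (hv : Function.Injective v) :
    ¬ ((d : ℤ) ∣ (Matrix.vandermonde fun i => ((v i : ℕ) : ℤ)).det) := by
  intro hdvd
  rw [Matrix.det_vandermonde] at hdvd
  have hp : Prime (d : ℤ) := Int.prime_iff_natAbs_prime.mpr (by simpa using hd)
  obtain ⟨i, _, hi⟩ := (hp.dvd_finset_prod_iff _).mp hdvd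
  obtain ⟨j, hj, hij⟩ := (hp.dvd_finset_prod_iff _).mp hi
  have hji : j ≠ i := by
    rw [Finset.mem_Ioi] at hj
    exact ne_of_gt hj
  have hne : ((v j : ℕ) : ℤ) - ((v i : ℕ) : ℤ) ≠ 0 := by
    intro h
    have hvv : (v j : ℕ) = (v i : ℕ) := by omega
    exact hji (hv (Fin.ext hvv))
  have h1 := Int.le_of_dvd (abs_pos.mpr hne) ((dvd_abs _ _).mpr hij)
  have h2 : |((v j : ℕ) : ℤ) - ((v i : ℕ) : ℤ)| < d := by
    have hjd := (v j).isLt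
    have hid := (v i).isLt
    rw [abs_lt]
    constructor <;> push_cast <;> omega
  omega

lemma not_dvd_factorials {d n : ℕ} (hd : d.Prime) (hnd : n ≤ d) :
    ¬ ((d : ℤ) ∣ ∏ k : Fin n, ((k : ℕ).factorial : ℤ)) := by
  intro hdvd
  have h1 : (d : ℤ) ∣ ((∏ k : Fin n, (k : ℕ).factorial : ℕ) : ℤ) := by
    rwa [Nat.cast_prod]
  rw [Int.natCast_dvd_natCast] at h1
  obtain ⟨k, _, hk⟩ := (hd.prime.dvd_finset_prod_iff _).mp h1
  have := (Nat.Prime.dvd_factorial hd).mp hk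
  have := k.isLt
  omega

theorem cheb_core {d : ℕ} (hd : d.Prime) {n : ℕ} (r c : Fin n → Fin d)
    (hr : Function.Injective r) (hc : Function.Injective c) {ζ : ℂ}
    (hζ : IsPrimitiveRoot ζ d) :
    (Matrix.of fun i j : Fin n => ζ ^ ((r i : ℕ) * (c j : ℕ))).det ≠ 0 := by
  classical
  haveI : Fact d.Prime := ⟨hd⟩
  have hnd : n ≤ d := by simpa using Fintype.card_le_of_injective r hr
  set a : Fin n → ℕ := fun i => (r i : ℕ) with ha
  set b : Fin n → ℕ := fun j => (c j : ℕ) with hb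
  set G : ℤ[X] := ∑ f : Fin n → Fin d,
      (X - 1) ^ ((∑ i, (f i : ℕ)) - ∑ i ∈ range n, i) *
      (∏ i, (∑ t ∈ range (a i), (X:ℤ[X]) ^ t) ^ ((f i : ℕ))) *
      C ((Matrix.of fun i j : Fin n => (Nat.choose (b j) (f i) : ℤ)).det) with hG
  have hfact : (Matrix.of fun i j : Fin n => (X : ℤ[X]) ^ (a i * b j)).det
      = (X - 1) ^ (∑ i ∈ range n, i) * G :=
    det_factored (d := d) a b (fun j => (c j).isLt)
  have hmap : (Polynomial.aeval ζ : ℤ[X] →ₐ[ℤ] ℂ)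
      ((Matrix.of fun i j : Fin n => (X : ℤ[X]) ^ (a i * b j)).det)
      = (Matrix.of fun i j : Fin n => ζ ^ ((r i : ℕ) * (c j : ℕ))).det := by
    rw [show ((Polynomial.aeval ζ : ℤ[X] →ₐ[ℤ] ℂ)
      ((Matrix.of fun i j : Fin n => (X : ℤ[X]) ^ (a i * b j)).det))
      = ((Polynomial.aeval ζ : ℤ[X] →ₐ[ℤ] ℂ) :
          ℤ[X] →+* ℂ) ((Matrix.of fun i j : Fin n => (X : ℤ[X]) ^ (a i * b j)).det) from rfl,
      RingHom.map_det]
    congr 1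
    ext i j
    simp [map_pow, ha, hb]
  intro hzero
  have h7 : (ζ - 1) ^ (∑ i ∈ range n, i) * (Polynomial.aeval ζ) G = 0 := by
    have := hmap
    rw [hfact] at this
    rw [_root_.map_mul, map_pow, _root_.map_sub, Polynomial.aeval_X, _root_.map_one] at this
    rw [this, hzero]
  have hζ1 : ζ - 1 ≠ 0 := sub_ne_zero.mpr (hζ.ne_one hd.one_lt)
  have hGζ : (Polynomial.aeval ζ) G = 0 := by
    rcases mul_eq_zero.mp h7 with h | h
    · exact absurd h (pow_ne_zero _ hζ1)
    · exact h
  have hmin : Polynomial.cyclotomic d ℤ = minpoly ℤ ζ :=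
    Polynomial.cyclotomic_eq_minpoly hζ hd.pos
  have hdvd : Polynomial.cyclotomic d ℤ ∣ G := by
    rw [hmin]
    exact minpoly.isIntegrallyClosed_dvd (hζ.isIntegral hd.pos) hGζ
  obtain ⟨HH, hHH⟩ := hdvd
  have hGdvd : (d : ℤ) ∣ G.eval 1 := by
    rw [hHH, Polynomial.eval_mul, Polynomial.eval_one_cyclotomic_prime]
    exact Dvd.intro _ rfl
  have hevalG : G.eval 1 = ∑ f : Fin n → Fin d,
      (0:ℤ) ^ ((∑ i, (f i : ℕ)) - ∑ i ∈ range n, i) *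
      (∏ i, (a i : ℤ) ^ ((f i : ℕ))) *
      (Matrix.of fun i j : Fin n => (Nat.choose (b j) (f i) : ℤ)).det := by
    rw [hG, Polynomial.eval_finset_sum]
    apply Finset.sum_congr rfl
    intro f _
    rw [Polynomial.eval_mul, Polynomial.eval_mul, Polynomial.eval_C, Polynomial.eval_pow,
      Polynomial.eval_sub, Polynomial.eval_X, Polynomial.eval_one, sub_self,
      Polynomial.eval_prod]
    congr 2
    apply Finset.prod_congr rfl
    intro i _
    rw [Polynomial.eval_pow, Polynomial.eval_finset_sum]
    simp
  have h8 : (∏ k : Fin n, ((k : ℕ).factorial : ℤ)) * G.eval 1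
      = (Matrix.vandermonde fun i => (a i : ℤ)).det *
        (Matrix.vandermonde fun j => (b j : ℤ)).det := by
    rw [hevalG, sum_perm_eq hnd a b, ← mul_assoc, mul_comm (∏ k : Fin n, ((k : ℕ).factorial : ℤ))
      ((Matrix.vandermonde fun i => (a i : ℤ)).det), mul_assoc, choose_det b]
  have hkey : (d : ℤ) ∣ (Matrix.vandermonde fun i => (a i : ℤ)).det *
      (Matrix.vandermonde fun j => (b j : ℤ)).det := by
    rw [← h8]
    exact Dvd.dvd.mul_left hGdvd _
  have hp : Prime (d : ℤ) := Int.prime_iff_natAbs_prime.mpr (by simpa using hd)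
  rcases hp.dvd_mul.mp hkey with h | h
  · exact not_dvd_vandermonde hd r hr h
  · exact not_dvd_vandermonde hd c hc h


end expand

end ChebAux

/-- Chebotarëv's theorem: if `d` is prime, every square submatrix of the Fourier
matrix (selected by injective row/column index maps) has nonzero determinant. -/
theorem chebotarev (d : ℕ) (hd : d.Prime) (n : ℕ)
    (r c : Fin n → Fin d) (hr : Function.Injective r) (hc : Function.Injective c) :
    ((Fourier d).submatrix r c).det ≠ 0 := by
  classical
  have hd0 : (d : ℂ) ≠ 0 := Nat.cast_ne_zero.mpr hd.pos.ne'
  set ζ : ℂ := Complex.exp (-(2 * Real.pi * Complex.I) / d) with hζdef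
  have hζ : IsPrimitiveRoot ζ d := by
    have h1 := Complex.isPrimitiveRoot_exp d hd.pos.ne'
    have h2 : ζ = (Complex.exp (2 * Real.pi * Complex.I / d))⁻¹ := by
      rw [hζdef, ← Complex.exp_neg, neg_div]
    rw [h2]
    exact h1.inv
  have hentry : ∀ (u v : ℕ), Complex.exp (-(2 * Real.pi * Complex.I * u * v) / d)
      = ζ ^ (u * v) := by
    intro u v
    rw [hζdef, ← Complex.exp_nat_mul]
    congr 1
    push_cast
    ring
  have hsub : (Fourier d).submatrix r c
      = ((1 / Real.sqrt d : ℂ)) • Matrix.of (fun i j : Fin n => ζ ^ ((r i : ℕ) * (c j : ℕ))) := by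
    ext i j
    simp only [Matrix.submatrix_apply, Fourier, Matrix.smul_apply, Matrix.of_apply,
      smul_eq_mul]
    rw [hentry]
  rw [hsub, Matrix.det_smul]
  apply mul_ne_zero
  · apply pow_ne_zero
    rw [one_div, ne_eq, inv_eq_zero]
    exact Complex.ofReal_ne_zero.mpr (Real.sqrt_ne_zero'.mpr (by exact_mod_cast hd.pos))
  · exact cheb_core hd r c hr hc hζ
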